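/- Let (A[Λ]) be a weak tower of complements for a subring R of K, and for x ∈ R define μ(x) := (supp x)⁺, the supremum cut of the support of the power series expansion of x determined by the tower. Then: (1) x ∈ A[Λ] iff μ(x) ≤ Λ; (2) μ(x+y) ≤ max(μx, μy); (3) if the tower is multiplicative (a tower of complements), μ(xy) ≤ μx + μy (left sum of cuts). -/

import Mathlib

set_option autoImplicit false

universe u v

/-- A Dedekind cut of a linearly ordered abelian group, represented by its left part
(`L = Λ^L`); the right part is the complement of `L`.  The cuts `-∞` (`L = ∅`) and
`+∞` (`L = G`) are included. -/
structure Cut (G : Type u) [AddCommGroup G] [LinearOrder G] [IsOrderedAddMonoid G] : Type u where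
  L : Set G
  lower : ∀ ⦃x y : G⦄, y ∈ L → x ≤ y → x ∈ L

namespace Cut

variable {G : Type u} [AddCommGroup G] [LinearOrder G] [IsOrderedAddMonoid G]

/-- Cuts are ordered by inclusion of left parts. -/
instance : PartialOrder (Cut G) where
  le Λ Γ := Λ.L ⊆ Γ.L
  le_refl _ := subset_rfl
  le_trans _ _ _ h h' := fun x hx => h' (h hx)
  le_antisymm := by
    rintro ⟨L₁, h₁⟩ ⟨L₂, h₂⟩ h h'
    simpa using Set.Subset.antisymm h h'

/-- `γ⁻`, the cut with left part `(-∞, γ)`. -/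
def lcut (γ : G) : Cut G := ⟨{x | x < γ}, fun _ _ hy hxy => lt_of_le_of_lt hxy hy⟩

/-- `γ⁺`, the cut with left part `(-∞, γ]`. -/
def rcut (γ : G) : Cut G := ⟨{x | x ≤ γ}, fun _ _ hy hxy => le_trans hxy hy⟩

/-- The left sum of cuts: the smallest cut whose left part contains all `λ + γ`
with `λ < Λ`, `γ < Γ`. -/
instance : Add (Cut G) :=
  ⟨fun Λ Γ => ⟨{x | ∃ l ∈ Λ.L, ∃ g ∈ Γ.L, x ≤ l + g}, by
    rintro x y ⟨l, hl, g, hg, hy⟩ hxy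
    exact ⟨l, hl, g, hg, hxy.trans hy⟩⟩⟩

/-- The right sum of cuts: the largest cut whose right part contains all `λ + γ`
with `λ > Λ`, `γ > Γ`. -/
def addR (Λ Γ : Cut G) : Cut G :=
  ⟨{x | ∀ l ∉ Λ.L, ∀ g ∉ Γ.L, x < l + g}, by
    intro x y hy hxy l hl g hg
    exact lt_of_le_of_lt hxy (hy l hl g hg)⟩

/-- The right difference of cuts: the largest cut whose right part contains all
`λ − γ` with `λ > Λ`, `γ < Γ`. -/
def sub (Λ Γ : Cut G) : Cut G :=
  ⟨{x | ∀ l ∉ Λ.L, ∀ g ∈ Γ.L, x < l - g}, by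
    intro x y hy hxy l hl g hg
    exact lt_of_le_of_lt hxy (hy l hl g hg)⟩

/-- Translation `γ + Λ` of a cut by a group element, with left part `{γ + λ : λ ∈ Λ^L}`. -/
def transl (γ : G) (Λ : Cut G) : Cut G :=
  ⟨(fun x => γ + x) '' Λ.L, by
    rintro x y ⟨l, hl, rfl⟩ hxy
    exact ⟨x - γ, Λ.lower hl (sub_le_iff_le_add'.mpr hxy), by show γ + (x - γ) = x; rw [add_comm, sub_add_cancel]⟩⟩

/-- Negation of a cut: `-Λ = (-Λ^R, -Λ^L)`. -/
def neg (Λ : Cut G) : Cut G :=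
  ⟨{x | -x ∉ Λ.L}, by
    intro x y hy hxy hx
    exact hy (Λ.lower hx (neg_le_neg hxy))⟩

/-- The `n`-fold left sum `Λ + Γ + ⋯ + Γ` (`Γ` added `n` times). -/
def addn (Λ Γ : Cut G) : ℕ → Cut G
  | 0 => Λ
  | n + 1 => addn Λ Γ n + Γ

/-- The `n`-fold right difference `Λ − Γ − ⋯ − Γ` (`Γ` subtracted `n` times). -/
def subn (Λ Γ : Cut G) : ℕ → Cut G
  | 0 => Λ
  | n + 1 => (subn Λ Γ n).sub Γ

/-- `nΓ = Γ + ⋯ + Γ` (`n` times); by convention `0 • Γ = 0⁺`, the neutral element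
of the left sum. -/
def nsmul : ℕ → Cut G → Cut G
  | 0, _ => rcut 0
  | 1, Γ => Γ
  | n + 2, Γ => nsmul (n + 1) Γ + Γ

/-- `ℤ`-multiples of a cut: `(-n)Γ := -(nΓ)`. -/
def zsmul (n : ℤ) (Γ : Cut G) : Cut G :=
  if 0 ≤ n then nsmul n.toNat Γ else (nsmul (-n).toNat Γ).neg

/-- `ℤΓ := sup {nΓ : n ∈ ℤ}`. -/
def zmul (Γ : Cut G) : Cut G :=
  ⟨⋃ n : ℤ, (zsmul n Γ).L, by
    intro x y hy hxy
    rcases Set.mem_iUnion.1 hy with ⟨n, hn⟩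
    exact Set.mem_iUnion.2 ⟨n, (zsmul n Γ).lower hn hxy⟩⟩

/-- `S⁺`: the smallest cut whose left part contains the set `S`. -/
def ofSet (s : Set G) : Cut G :=
  ⟨{x | ∃ γ ∈ s, x ≤ γ}, by
    rintro x y ⟨γ, hγ, hy⟩ hxy
    exact ⟨γ, hγ, hxy.trans hy⟩⟩

/-- The supremum (maximum) of two cuts. -/
def max (Λ Γ : Cut G) : Cut G :=
  ⟨Λ.L ∪ Γ.L, by
    rintro x y (hy | hy) hxy
    · exact Or.inl (Λ.lower hy hxy)
    · exact Or.inr (Γ.lower hy hxy)⟩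

/-- The infimum of a set of cuts. -/
def inf (s : Set (Cut G)) : Cut G :=
  ⟨{x | ∀ Λ ∈ s, x ∈ Λ.L}, by
    intro x y hy hxy Λ hΛ
    exact Λ.lower (hy Λ hΛ) hxy⟩

end Cut

/-- A valued field `K` (of equal characteristic) with value group `G`, a value group
section `t`, and an embedded residue field `k ⊆ K` (the residue field section is the
inclusion). The valuation is written additively, with `v 0 = ⊤`. -/
structure VData (K : Type u) (G : Type v) [Field K] [AddCommGroup G] [LinearOrder G] [IsOrderedAddMonoid G] where
  v : K → WithTop G
  k : Subfield K
  t : G → K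
  v_eq_top : ∀ x : K, v x = ⊤ ↔ x = 0
  v_mul : ∀ x y : K, v (x * y) = v x + v y
  v_sub : ∀ x y : K, min (v x) (v y) ≤ v (x - y)
  v_surj : ∀ γ : G, ∃ x : K, v x = (γ : WithTop G)
  v_t : ∀ γ : G, v (t γ) = (γ : WithTop G)
  t_neg : ∀ γ : G, t (-γ) = (t γ)⁻¹
  v_k : ∀ c ∈ k, c ≠ 0 → v c = (0 : WithTop G)
  k_res : ∀ x : K, v x = (0 : WithTop G) → ∃ c ∈ k, (0 : WithTop G) < v (x - c)

namespace VData

variable {K : Type u} {G : Type v} [Field K] [AddCommGroup G] [LinearOrder G] [IsOrderedAddMonoid G]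

/-- `O[Λ] = {x ∈ K : v(x) > Λ}`, the (possibly fractional) ideal of the valuation
ring associated with the cut `Λ`. -/
def Oc (S : VData K G) (Λ : Cut G) : Set K :=
  {x | ∀ γ : G, S.v x = (γ : WithTop G) → γ ∉ Λ.L}

/-- `O_R[Λ] = {x ∈ R : v(x) > Λ}`, for a subring `R` of `K`. -/
def OcR (S : VData K G) (R : Subring K) (Λ : Cut G) : Set K :=
  {x | x ∈ R ∧ ∀ γ : G, S.v x = (γ : WithTop G) → γ ∉ Λ.L}

end VData

/-- Axioms CA–CD of a (weak) tower of complements for the valued field `K`: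
each `A[Λ]` is a `k`-subspace of `K` (CA), `A[Λ] ⊕ O[Λ] = K` (CB),
`t(γ)·k ⊆ A[γ⁺]` (CC), and `Γ ≤ Λ ↔ A[Γ] ⊆ A[Λ]` (CD). -/
structure TowerBase {K : Type u} {G : Type v} [Field K] [AddCommGroup G] [LinearOrder G] [IsOrderedAddMonoid G]
    (S : VData K G) where
  A : Cut G → Set K
  zero_mem : ∀ Λ : Cut G, (0 : K) ∈ A Λ
  add_mem : ∀ Λ : Cut G, ∀ x ∈ A Λ, ∀ y ∈ A Λ, x + y ∈ A Λ
  smul_mem : ∀ Λ : Cut G, ∀ c ∈ S.k, ∀ x ∈ A Λ, c * x ∈ A Λ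
  disj : ∀ Λ : Cut G, ∀ x ∈ A Λ, x ∈ S.Oc Λ → x = 0
  spans : ∀ Λ : Cut G, ∀ x : K, ∃ a ∈ A Λ, ∃ o ∈ S.Oc Λ, x = a + o
  sec_mem : ∀ γ : G, ∀ c ∈ S.k, c * S.t γ ∈ A (Cut.rcut γ)
  mono : ∀ Γ Λ : Cut G, Γ ≤ Λ ↔ A Γ ⊆ A Λ

/-- A weak tower of complements: CA–CD together with CF (`A[γ+Λ] = t(γ)·A[Λ]`). -/
structure WeakTower {K : Type u} {G : Type v} [Field K] [AddCommGroup G] [LinearOrder G] [IsOrderedAddMonoid G]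
    (S : VData K G) extends TowerBase S where
  transl_eq : ∀ (γ : G) (Λ : Cut G),
    A (Cut.transl γ Λ) = (fun x => S.t γ * x) '' A Λ

/-- A tower of complements: CA–CD together with the multiplicativity axiom CE
(`A[Λ]·A[Γ] ⊆ A[Λ+Γ]`). -/
structure Tower {K : Type u} {G : Type v} [Field K] [AddCommGroup G] [LinearOrder G] [IsOrderedAddMonoid G]
    (S : VData K G) extends TowerBase S where
  mul_mem : ∀ Λ Γ : Cut G, ∀ x ∈ A Λ, ∀ y ∈ A Γ, x * y ∈ A (Λ + Γ)

/-- Axioms CA–CD of a (weak) tower of complements for a subring `R` of `K`. -/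
structure RTowerBase {K : Type u} {G : Type v} [Field K] [AddCommGroup G] [LinearOrder G] [IsOrderedAddMonoid G]
    (S : VData K G) (R : Subring K) where
  A : Cut G → Set K
  subset_R : ∀ Λ : Cut G, A Λ ⊆ (R : Set K)
  zero_mem : ∀ Λ : Cut G, (0 : K) ∈ A Λ
  add_mem : ∀ Λ : Cut G, ∀ x ∈ A Λ, ∀ y ∈ A Λ, x + y ∈ A Λ
  smul_mem : ∀ Λ : Cut G, ∀ c ∈ S.k, ∀ x ∈ A Λ, c * x ∈ A Λ
  disj : ∀ Λ : Cut G, ∀ x ∈ A Λ, x ∈ S.OcR R Λ → x = 0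
  spans : ∀ Λ : Cut G, ∀ x ∈ R, ∃ a ∈ A Λ, ∃ o ∈ S.OcR R Λ, x = a + o
  sec_mem : ∀ γ : G, ∀ c ∈ S.k, c * S.t γ ∈ A (Cut.rcut γ)
  mono : ∀ Γ Λ : Cut G, Γ ≤ Λ ↔ A Γ ⊆ A Λ

/-- A weak tower of complements for a subring `R` of `K`: CA–CD together with CF. -/
structure RWeakTower {K : Type u} {G : Type v} [Field K] [AddCommGroup G] [LinearOrder G] [IsOrderedAddMonoid G]
    (S : VData K G) (R : Subring K) extends RTowerBase S R where
  transl_eq : ∀ (γ : G) (Λ : Cut G),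
    A (Cut.transl γ Λ) = (fun x => S.t γ * x) '' A Λ

namespace RTowerBase

variable {K : Type u} {G : Type v} [Field K] [AddCommGroup G] [LinearOrder G] [IsOrderedAddMonoid G]
  {S : VData K G} {R : Subring K}

/-- The support of `x ∈ R` with respect to a (weak) tower of complements:
`γ ∈ supp x` iff the coefficient `a_γ(x)` in the decomposition
`x = x₁ + a_γ(x) t(γ) + x₃` (with `x₁ ∈ A[γ⁻]`, `v(x₃) > γ`) is nonzero, i.e.
iff `x ∉ A[γ⁻] + O[γ⁺]`. -/
def supp (T : RTowerBase S R) (x : K) : Set G :=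
  {γ | ¬ ∃ a ∈ T.A (Cut.lcut γ), ∃ o ∈ S.OcR R (Cut.rcut γ), x = a + o}

/-- `μ(x) := (supp x)⁺`, the smallest cut whose left part contains the support. -/
def mu (T : RTowerBase S R) (x : K) : Cut G :=
  Cut.ofSet (T.supp x)

end RTowerBase

namespace TowerBase

variable {K : Type u} {G : Type v} [Field K] [AddCommGroup G] [LinearOrder G] [IsOrderedAddMonoid G]
  {S : VData K G}

/-- `μ(x) := inf {Λ : x ∈ A[Λ]}`. -/
def muInf (T : TowerBase S) (x : K) : Cut G :=
  Cut.inf {Λ | x ∈ T.A Λ}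

end TowerBase

namespace RTowerBase

variable {K : Type u} {G : Type v} [Field K] [AddCommGroup G] [LinearOrder G] [IsOrderedAddMonoid G]
  {S : VData K G} {R : Subring K}

/-- `μ(x) := inf {Λ : x ∈ A[Λ]}`. -/
def muInf (T : RTowerBase S R) (x : K) : Cut G :=
  Cut.inf {Λ | x ∈ T.A Λ}

end RTowerBase

section Aux

variable {K : Type u} {G : Type v} [Field K] [AddCommGroup G] [LinearOrder G] [IsOrderedAddMonoid G]

namespace VData

lemma v_neg' (S : VData K G) (y : K) : S.v (-y) = S.v y := by
  have h1 : ∀ z : K, S.v z ≤ S.v (-z) := by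
    intro z
    have h := S.v_sub 0 z
    rw [zero_sub, (S.v_eq_top 0).mpr rfl, min_eq_right le_top] at h
    exact h
  refine le_antisymm ?_ (h1 y)
  have := h1 (-y)
  rwa [neg_neg] at this

lemma v_add' (S : VData K G) (x y : K) : min (S.v x) (S.v y) ≤ S.v (x + y) := by
  have h := S.v_sub x (-y)
  rwa [sub_neg_eq_add, S.v_neg'] at h

lemma v_sub_eq' (S : VData K G) {x y : K} (h : S.v x < S.v y) :
    S.v (x - y) = S.v x := by
  refine le_antisymm ?_ (le_trans (le_of_eq (min_eq_left h.le).symm) (S.v_sub x y))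
  have h2 := S.v_add' (x - y) y
  rw [sub_add_cancel] at h2
  rcases min_le_iff.mp h2 with h3 | h3
  · exact h3
  · exact absurd h3 (not_le.mpr h)

/-- `↑γ < v z` iff every group value of `z` exceeds `γ`. -/
lemma lt_v_iff (S : VData K G) (z : K) (γ : G) :
    (↑γ < S.v z) ↔ ∀ g : G, S.v z = ↑g → ¬ g ≤ γ := by
  constructor
  · intro h g hg hle
    rw [hg] at h
    exact absurd (WithTop.coe_lt_coe.mp h) (not_lt.mpr hle)
  · intro h
    cases hz : S.v z with
    | top => exact hz ▸ WithTop.coe_lt_top γ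
    | coe g => exact WithTop.coe_lt_coe.mpr (lt_of_not_ge (h g hz))

end VData

namespace RTowerBase

variable {S : VData K G} {R : Subring K}

lemma mu_le_iff (T : RTowerBase S R) (x : K) (Λ : Cut G) :
    T.mu x ≤ Λ ↔ T.supp x ⊆ Λ.L := by
  constructor
  · intro h γ hγ
    exact h ⟨γ, hγ, le_refl γ⟩
  · rintro h z ⟨γ, hγ, hz⟩
    exact Λ.lower (h hγ) hz

lemma sub_mem_A (T : RTowerBase S R) (Λ : Cut G) {a b : K}
    (ha : a ∈ T.A Λ) (hb : b ∈ T.A Λ) : a - b ∈ T.A Λ := by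
  have h1 : (-1 : K) * b ∈ T.A Λ :=
    T.smul_mem Λ (-1) (S.k.neg_mem S.k.one_mem) b hb
  have := T.add_mem Λ a ha ((-1 : K) * b) h1
  simpa [sub_eq_add_neg] using this

end RTowerBase

variable {S : VData K G} {R : Subring K}

lemma le_lcut_of_not_mem {Λ : Cut G} {γ : G} (h : γ ∉ Λ.L) : Λ ≤ Cut.lcut γ :=
  fun z hz => lt_of_not_ge (fun hle => h (Λ.lower hz hle))

lemma supp_subset_of_mem (T : RWeakTower S R) {x : K} {Λ : Cut G} (hx : x ∈ T.A Λ) :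
    T.toRTowerBase.supp x ⊆ Λ.L := by
  intro γ hγ
  by_contra hγΛ
  apply hγ
  refine ⟨x, (T.mono Λ (Cut.lcut γ)).mp (le_lcut_of_not_mem hγΛ) hx, 0,
    ⟨R.zero_mem, ?_⟩, (add_zero x).symm⟩
  intro g hg
  rw [(S.v_eq_top 0).mpr rfl] at hg
  exact absurd hg.symm (WithTop.coe_ne_top)

lemma mem_of_supp_subset (T : RWeakTower S R) {x : K} (hxR : x ∈ R) {Λ : Cut G}
    (h : T.toRTowerBase.supp x ⊆ Λ.L) : x ∈ T.A Λ := by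
  obtain ⟨a, ha, o, ⟨hoR, hov⟩, rfl⟩ := T.spans Λ x hxR
  by_cases ho : o = 0
  · simpa [ho] using ha
  exfalso
  have hvo : S.v o ≠ ⊤ := fun ht => ho ((S.v_eq_top o).mp ht)
  obtain ⟨γ₀, hγ₀⟩ : ∃ g : G, S.v o = ↑g := by
    cases hz : S.v o with
    | top => exact absurd hz hvo
    | coe g => exact ⟨g, rfl⟩
  have hγ₀Λ : γ₀ ∉ Λ.L := hov γ₀ hγ₀
  have hns : γ₀ ∉ T.toRTowerBase.supp (a + o) := fun hs => hγ₀Λ (h hs)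
  obtain ⟨a', ha', o', ⟨ho'R, ho'v⟩, heq⟩ := not_not.mp hns
  -- v o' > γ₀
  have hvo' : (↑γ₀ : WithTop G) < S.v o' := (S.lt_v_iff o' γ₀).mpr ho'v
  have hlt : S.v o < S.v o' := hγ₀ ▸ hvo'
  have hd : a' - a = o - o' := by
    have : a + o = a' + o' := heq
    linear_combination (-1 : K) * this
  have hvd : S.v (a' - a) = ↑γ₀ := by rw [hd, S.v_sub_eq' hlt, hγ₀]
  have haA : a ∈ T.A (Cut.lcut γ₀) :=
    (T.mono Λ (Cut.lcut γ₀)).mp (le_lcut_of_not_mem hγ₀Λ) ha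
  have hsub : a' - a ∈ T.A (Cut.lcut γ₀) := T.toRTowerBase.sub_mem_A _ ha' haA
  have hzero : a' - a = 0 := by
    refine T.disj (Cut.lcut γ₀) _ hsub ⟨?_, ?_⟩
    · exact R.sub_mem (T.subset_R _ ha') (T.subset_R Λ ha)
    · intro g hg
      rw [hvd] at hg
      have : g = γ₀ := (WithTop.coe_inj.mp hg).symm
      subst this
      exact fun hh => lt_irrefl _ hh
  have h0 : o - o' = 0 := by rw [← hd, hzero]
  rw [sub_eq_zero.mp h0] at hlt
  exact lt_irrefl _ hlt

end Aux

/-- Let `(A[Λ])` be a weak tower of complements for a subring `R` of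
`K` (containing the valuation ring and the image of `t`), and for `x ∈ R` let
`μ(x) := (supp x)⁺`.  Then: (1) `x ∈ A[Λ]` iff `μ(x) ≤ Λ`;
(2) `μ(x+y) ≤ max(μx, μy)`; (3) if the tower is multiplicative,
`μ(xy) ≤ μx + μy` (left sum of cuts). -/
theorem mu_basic_properties {K : Type u} {G : Type v}
    [Field K] [AddCommGroup G] [LinearOrder G] [IsOrderedAddMonoid G]
    (S : VData K G) (R : Subring K)
    (hO : ∀ x : K, (0 : WithTop G) ≤ S.v x → x ∈ R)
    (ht : ∀ γ : G, S.t γ ∈ R)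
    (T : RWeakTower S R) :
    (∀ Λ : Cut G, ∀ x ∈ R, (x ∈ T.A Λ ↔ T.toRTowerBase.mu x ≤ Λ)) ∧
    (∀ x ∈ R, ∀ y ∈ R,
      T.toRTowerBase.mu (x + y) ≤
        Cut.max (T.toRTowerBase.mu x) (T.toRTowerBase.mu y)) ∧
    ((∀ Λ Γ : Cut G, ∀ a ∈ T.A Λ, ∀ b ∈ T.A Γ, a * b ∈ T.A (Λ + Γ)) →
      ∀ x ∈ R, ∀ y ∈ R,
        T.toRTowerBase.mu (x * y) ≤ T.toRTowerBase.mu x + T.toRTowerBase.mu y) := by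
  constructor
  · -- part (1)
    intro Λ x hxR
    constructor
    · intro hx
      exact (T.toRTowerBase.mu_le_iff x Λ).mpr (supp_subset_of_mem T hx)
    · intro hle
      exact mem_of_supp_subset T hxR ((T.toRTowerBase.mu_le_iff x Λ).mp hle)
  constructor
  · -- part (2)
    intro x hx y hy
    rw [T.toRTowerBase.mu_le_iff]
    intro γ hγ
    by_contra hmem
    have hmx : γ ∉ (T.toRTowerBase.mu x).L := fun hh => hmem (Or.inl hh)
    have hmy : γ ∉ (T.toRTowerBase.mu y).L := fun hh => hmem (Or.inr hh)
    have hsx : γ ∉ T.toRTowerBase.supp x := fun hs => hmx ⟨γ, hs, le_refl γ⟩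
    have hsy : γ ∉ T.toRTowerBase.supp y := fun hs => hmy ⟨γ, hs, le_refl γ⟩
    obtain ⟨a, ha, o, ⟨hoR, hov⟩, hxe⟩ := not_not.mp hsx
    obtain ⟨a', ha', o', ⟨ho'R, ho'v⟩, hye⟩ := not_not.mp hsy
    apply hγ
    refine ⟨a + a', T.add_mem _ a ha a' ha', o + o', ⟨R.add_mem hoR ho'R, ?_⟩, ?_⟩
    · intro g hg hgle
      have h1 : (↑γ : WithTop G) < S.v o := (S.lt_v_iff o γ).mpr hov
      have h2 : (↑γ : WithTop G) < S.v o' := (S.lt_v_iff o' γ).mpr ho'v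
      have h3 : (↑γ : WithTop G) < S.v (o + o') :=
        lt_of_lt_of_le (lt_min h1 h2) (S.v_add' o o')
      rw [hg] at h3
      exact absurd (WithTop.coe_lt_coe.mp h3) (not_lt.mpr hgle)
    · rw [hxe, hye]; ring
  · -- part (3)
    intro hmul x hx y hy
    have hxA : x ∈ T.A (T.toRTowerBase.mu x) :=
      mem_of_supp_subset T hx
        ((T.toRTowerBase.mu_le_iff x _).mp (le_refl _))
    have hyA : y ∈ T.A (T.toRTowerBase.mu y) :=
      mem_of_supp_subset T hy
        ((T.toRTowerBase.mu_le_iff y _).mp (le_refl _))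
    have := hmul _ _ x hxA y hyA
    exact (T.toRTowerBase.mu_le_iff _ _).mpr (supp_subset_of_mem T this)
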